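/- Let T ∈ Tree(N) be an (n,d)-regular rooted tree with n ≥ 2. Then for every non-crossing partition π, the cumulant coefficient is α_{T,π} = (d/(n−1))^{I(π)}, where I(π) is the number of inner blocks of π. -/

import Mathlib

/-- The alternating reduction of a string: replace each maximal run of
consecutive equal letters by a single occurrence of that letter. -/
def red {α : Type*} [DecidableEq α] : List α → List α
  | [] => []
  | [a] => [a]
  | a :: b :: t => if a = b then red (b :: t) else a :: red (b :: t)

/-- A rooted subtree of the tree of alternating strings on alphabet `α`. -/
def IsRootedSubtree {α : Type*} (S : Set (List α)) : Prop :=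
  (∀ s ∈ S, s.Chain' (· ≠ ·)) ∧ [] ∈ S ∧ ∀ s ∈ S, s.tail ∈ S

/-- Partitions of finite subsets of `ℕ` (finite totally ordered sets, up to
isomorphism), given by their set of blocks. -/
abbrev Blocks : Type := Finset (Finset ℕ)

/-- `π` is a non-crossing partition (of its ground set `⋃ π`). -/
def IsNC (π : Blocks) : Prop :=
  (∀ B ∈ π, B.Nonempty) ∧
  (∀ B ∈ π, ∀ C ∈ π, B ≠ C → Disjoint B C) ∧
  (∀ B ∈ π, ∀ C ∈ π, B ≠ C →
    ¬ ∃ i₁ j₁ i₂ j₂ : ℕ, i₁ < j₁ ∧ j₁ < i₂ ∧ i₂ < j₂ ∧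
      i₁ ∈ B ∧ i₂ ∈ B ∧ j₁ ∈ C ∧ j₂ ∈ C)

/-- `V` is nested inside `W`. -/
def NestedIn (V W : Finset ℕ) : Prop :=
  ∃ j ∈ W, ∃ k ∈ W, ∀ x ∈ V, j < x ∧ x < k

/-- `V` is immediately nested inside `W` (an edge of the nesting tree of `π`). -/
def ImmNested (π : Blocks) (V W : Finset ℕ) : Prop :=
  NestedIn V W ∧ ¬ ∃ X ∈ π, NestedIn V X ∧ NestedIn X W

/-- Adjacency of blocks in the nesting tree `graph(π)` (away from the root). -/
def AdjBlocks (π : Blocks) (V W : Finset ℕ) : Prop :=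
  ImmNested π V W ∨ ImmNested π W V

/-- `V` and `W` lie in the same `χ`-component of `π`: they are joined by a path
in `graph(π) ∖ {∅}` all of whose edges join blocks of the same color. -/
def sameComp {N : ℕ} (π : Blocks) (χ : Finset ℕ → Fin N) (V W : Finset ℕ) : Prop :=
  Relation.ReflTransGen
    (fun X Y => X ∈ π ∧ Y ∈ π ∧ AdjBlocks π X Y ∧ χ X = χ Y) V W

open Classical in
noncomputable def component {N : ℕ} (π : Blocks) (χ : Finset ℕ → Fin N)
    (V : Finset ℕ) : Finset (Finset ℕ) :=
  π.filter (fun W => sameComp π χ V W)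

-- The `χ`-components of `π`.
open Classical in
noncomputable def components {N : ℕ} (π : Blocks) (χ : Finset ℕ → Fin N) :
    Finset Blocks :=
  π.image (fun V => component π χ V)

/-- `L` is the chain of `V` in `π`: the list `(V, V₁, …, V_d)` consisting of `V`
followed by all blocks surrounding `V`, each nested in the next. -/
def IsChainList (π : Blocks) (V : Finset ℕ) (L : List (Finset ℕ)) : Prop :=
  L.head? = some V ∧ (∀ W, W ∈ L.tail ↔ W ∈ π ∧ NestedIn V W) ∧
  L.Chain' (fun X Y => NestedIn X Y) ∧ L.Nodup

/-- `χ ∈ X_w(π,T)`: for every block `V`, the alternating reduction of the color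
string along the chain of `V` lies in `T`. -/
def WeaklyCompatible {N : ℕ} (T : Set (List (Fin N))) (π : Blocks)
    (χ : Finset ℕ → Fin N) : Prop :=
  ∀ V ∈ π, ∀ L : List (Finset ℕ), IsChainList π V L → red (L.map χ) ∈ T

/-- Extend a coloring of the blocks of `π` by a junk value. -/
def extendColor {N : ℕ} [NeZero N] (π : Blocks)
    (χ : {V : Finset ℕ // V ∈ π} → Fin N) : Finset ℕ → Fin N :=
  fun W => if h : W ∈ π then χ ⟨W, h⟩ else 0

-- The right-hand side of the fixed-point identity for the cumulant
-- coefficients: `n^{−|π|} Σ_{χ ∈ X_w(π,T)} Π_{χ-components π'} a(π')`.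
open Classical in
noncomputable def cumulantRHS {N : ℕ} [NeZero N] (n : ℕ) (T : Set (List (Fin N)))
    (a : Blocks → ℝ) (π : Blocks) : ℝ :=
  (∑ χ : ({V : Finset ℕ // V ∈ π} → Fin N),
      if WeaklyCompatible T π (extendColor π χ) then
        ∏ τ ∈ components π (extendColor π χ), a τ
      else 0) / (n : ℝ) ^ π.card

/-- `a` is a family of cumulant coefficients for `T`: normalized on one-block
partitions, and satisfying the fixed-point identity for all non-crossing `π`. -/
def SatisfiesFP {N : ℕ} [NeZero N] (n : ℕ) (T : Set (List (Fin N)))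
    (a : Blocks → ℝ) : Prop :=
  (∀ π : Blocks, IsNC π → π.card = 1 → a π = 1) ∧
  (∀ π : Blocks, IsNC π → a π = cumulantRHS n T a π)

/-- Number of inner blocks of `π` (blocks nested inside some other block). -/
noncomputable def innerCount (π : Blocks) : ℕ :=
  {V : Finset ℕ | V ∈ π ∧ ∃ W ∈ π, NestedIn V W}.ncard

section NestedBasics

theorem nested_trans {V W X : Finset ℕ} (h1 : NestedIn V W) (h2 : NestedIn W X) :
    NestedIn V X := by
  obtain ⟨j, hj, k, hk, h⟩ := h1
  obtain ⟨j', hj', k', hk', h'⟩ := h2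
  exact ⟨j', hj', k', hk', fun x hx => ⟨lt_trans (h' j hj).1 (h x hx).1,
    lt_trans (h x hx).2 (h' k hk).2⟩⟩

theorem nested_asymm {V W : Finset ℕ} (h1 : NestedIn V W) (h2 : NestedIn W V) : False := by
  obtain ⟨j, hj, k, hk, h⟩ := h1
  obtain ⟨j', hj', k', hk', h'⟩ := h2
  exact lt_asymm (h j' hj').1 (h' j hj).1

theorem nested_irrefl {V : Finset ℕ} (h : NestedIn V V) : False := nested_asymm h h

theorem nested_min_lt {U V : Finset ℕ} (hU : U.Nonempty) (h : NestedIn U V) :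
    V.min < U.min := by
  obtain ⟨j, hj, k, hk, hh⟩ := h
  have h1 : U.min = ((U.min' hU : ℕ) : WithTop ℕ) := (Finset.coe_min' hU).symm
  calc V.min ≤ (j : WithTop ℕ) := Finset.min_le hj
    _ < U.min := by
        rw [h1]
        exact_mod_cast (hh _ (U.min'_mem hU)).1

/-- Totality of nesting among blocks surrounding a common nonempty set. -/
theorem nested_total {π : Blocks} (hNC : IsNC π) {V W X : Finset ℕ} (hV : V.Nonempty)
    (hW : W ∈ π) (hX : X ∈ π) (hWX : W ≠ X) (h1 : NestedIn V W) (h2 : NestedIn V X) :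
    NestedIn X W ∨ NestedIn W X := by
  have key : ∀ B C, B ∈ π → C ∈ π → B ≠ C → ∀ (hBne : B.Nonempty) (hCne : C.Nonempty),
      NestedIn V B → NestedIn V C →
      (B.min' hBne < C.min' hCne) → NestedIn C B := by
    intro B C hB hC hBC hBne hCne hVB hVC hlt
    have hdisj := hNC.2.1 B hB C hC hBC
    refine ⟨B.min' hBne, B.min'_mem hBne, B.max' hBne, B.max'_mem hBne, ?_⟩
    intro x hx
    constructor
    · exact lt_of_lt_of_le hlt (C.min'_le x hx)
    · by_contra hcon
      push_neg at hcon
      have hxmax : B.max' hBne < x := by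
        rcases lt_or_eq_of_le hcon with h | h
        · exact h
        · exact absurd (h ▸ hx) (fun hmem => Finset.disjoint_left.mp hdisj (B.max'_mem hBne) hmem)
      -- crossing: B.min' < C.min' < k < x with k ∈ B bigger than an elt of V
      obtain ⟨j, hj, k, hk, hcond⟩ := hVB
      obtain ⟨j', hj', k', hk', hcond'⟩ := hVC
      obtain ⟨v, hv⟩ := hV
      have h3 : C.min' hCne < k := lt_of_le_of_lt (C.min'_le j' hj') (lt_trans (hcond' v hv).1 (hcond v hv).2)
      have h4 : k < x := lt_of_le_of_lt (B.le_max' k hk) hxmax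
      exact hNC.2.2 B hB C hC hBC ⟨B.min' hBne, C.min' hCne, k, x, hlt, h3, h4,
        B.min'_mem hBne, hk, C.min'_mem hCne, hx⟩
  have hWne : W.Nonempty := hNC.1 W hW
  have hXne : X.Nonempty := hNC.1 X hX
  rcases lt_trichotomy (W.min' hWne) (X.min' hXne) with h | h | h
  · exact Or.inl (key W X hW hX hWX _ _ h1 h2 h)
  · exfalso
    have := Finset.disjoint_left.mp (hNC.2.1 W hW X hX hWX) (W.min'_mem hWne)
    exact this (h ▸ X.min'_mem hXne)
  · exact Or.inr (key X W hX hW (Ne.symm hWX) _ _ h2 h1 h)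

theorem isNC_subset {π τ : Blocks} (hNC : IsNC π) (hsub : τ ⊆ π) : IsNC τ :=
  ⟨fun B hB => hNC.1 B (hsub hB),
   fun B hB C hC h => hNC.2.1 B (hsub hB) C (hsub hC) h,
   fun B hB C hC h => hNC.2.2 B (hsub hB) C (hsub hC) h⟩

end NestedBasics

section RedLemmas

variable {α : Type*} [DecidableEq α]

theorem red_cons (a : α) (l : List α) :
    red (a :: l) = if l.head? = some a then red l else a :: red l := by
  cases l with
  | nil => simp [red]
  | cons b t =>
    by_cases h : a = b
    · subst h; simp [red]
    · simp [red, h, Ne.symm h]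

theorem red_ne_nil : ∀ {l : List α}, l ≠ [] → red l ≠ []
  | [], h => absurd rfl h
  | [a], _ => by simp [red]
  | a :: b :: t, _ => by
      rw [red]
      split
      · exact red_ne_nil (by simp)
      · simp

theorem head?_red : ∀ l : List α, (red l).head? = l.head?
  | [] => rfl
  | [a] => rfl
  | a :: b :: t => by
      rw [red]
      split
      · rename_i h; rw [head?_red (b :: t)]; simp [h]
      · simp

theorem red_map_const {β : Type*} (c : α) :
    ∀ (l : List β), l ≠ [] → red (l.map fun _ => c) = [c]
  | [], h => absurd rfl h
  | [b], _ => by simp [red]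
  | b :: b' :: t, _ => by
      have := red_map_const c (b' :: t) (by simp)
      simpa [red] using this

end RedLemmas
section SortedLists

variable {α : Type*} {r : α → α → Prop}

theorem chain'_rel_of_mem_tail (htr : Transitive r) :
    ∀ {a : α} {l : List α}, (a :: l).Chain' r → ∀ x ∈ l, r a x := by
  intro a l
  induction l generalizing a with
  | nil => intro _ x hx; simp at hx
  | cons b t ih =>
    intro h x hx
    obtain ⟨hab, ht⟩ := List.isChain_cons_cons.mp h
    rcases List.mem_cons.mp hx with rfl | hx
    · exact hab
    · exact htr hab (ih ht x hx)

theorem chain_eq_of_mem_iff (htr : Transitive r)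
    (hasym : ∀ a b, r a b → r b a → False) :
    ∀ (l₁ l₂ : List α), l₁.Chain' r → l₂.Chain' r → l₁.Nodup → l₂.Nodup →
      (∀ x, x ∈ l₁ ↔ x ∈ l₂) → l₁ = l₂ := by
  intro l₁
  induction l₁ with
  | nil =>
    intro l₂ _ _ _ _ hmem
    cases l₂ with
    | nil => rfl
    | cons b t => exact absurd ((hmem b).mpr (by simp)) (by simp)
  | cons a t₁ ih =>
    intro l₂ h₁ h₂ hn₁ hn₂ hmem
    cases l₂ with
    | nil => exact absurd ((hmem a).mp (by simp)) (by simp)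
    | cons b t₂ =>
      have hab : a = b := by
        by_contra hne
        have ha2 : a ∈ t₂ := by
          have := (hmem a).mp (by simp); simpa [hne] using this
        have hb1 : b ∈ t₁ := by
          have := (hmem b).mpr (by simp); simpa [Ne.symm hne] using this
        exact hasym a b (chain'_rel_of_mem_tail htr h₁ b hb1)
          (chain'_rel_of_mem_tail htr h₂ a ha2)
      subst hab
      have : t₁ = t₂ := by
        refine ih t₂ (List.IsChain.tail h₁) (List.IsChain.tail h₂)
          (List.Nodup.of_cons hn₁) (List.Nodup.of_cons hn₂) ?_
        intro x
        constructor
        · intro hx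
          have hxa : x ≠ a := fun h => (List.nodup_cons.mp hn₁).1 (h ▸ hx)
          have := (hmem x).mp (List.mem_cons_of_mem a hx)
          simpa [hxa] using this
        · intro hx
          have hxa : x ≠ a := fun h => (List.nodup_cons.mp hn₂).1 (h ▸ hx)
          have := (hmem x).mpr (List.mem_cons_of_mem a hx)
          simpa [hxa] using this
      rw [this]

theorem finset_exists_min [DecidableEq α] (htr : Transitive r) :
    ∀ (s : Finset α), s.Nonempty →
      (∀ x ∈ s, ∀ y ∈ s, x ≠ y → r x y ∨ r y x) →
      ∃ m ∈ s, ∀ y ∈ s, y ≠ m → r m y := by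
  intro s
  induction s using Finset.strongInduction with
  | _ s ih =>
    intro hne htot
    obtain ⟨a, ha⟩ := hne
    by_cases h : s.erase a = ∅
    · refine ⟨a, ha, fun y hy hya => ?_⟩
      exact absurd (Finset.mem_erase.mpr ⟨hya, hy⟩) (by simp [h])
    · obtain ⟨m, hm, hmin⟩ := ih (s.erase a) (Finset.erase_ssubset ha)
        (Finset.nonempty_iff_ne_empty.mpr h)
        (fun x hx y hy => htot x (Finset.mem_of_mem_erase hx) y (Finset.mem_of_mem_erase hy))
      have hma : m ≠ a := (Finset.mem_erase.mp hm).1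
      rcases htot a ha m (Finset.mem_of_mem_erase hm) (Ne.symm hma) with hr | hr
      · refine ⟨a, ha, fun y hy hya => ?_⟩
        by_cases hym : y = m
        · exact hym ▸ hr
        · exact htr hr (hmin y (Finset.mem_erase.mpr ⟨hya, hy⟩) hym)
      · refine ⟨m, Finset.mem_of_mem_erase hm, fun y hy hym => ?_⟩
        by_cases hya : y = a
        · exact hya ▸ hr
        · exact hmin y (Finset.mem_erase.mpr ⟨hya, hy⟩) hym

theorem finset_exists_sorted [DecidableEq α] (htr : Transitive r) :
    ∀ (s : Finset α), (∀ x ∈ s, ∀ y ∈ s, x ≠ y → r x y ∨ r y x) →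
      ∃ l : List α, l.Chain' r ∧ l.Nodup ∧ ∀ x, x ∈ l ↔ x ∈ s := by
  intro s
  induction s using Finset.strongInduction with
  | _ s ih =>
    intro htot
    rcases s.eq_empty_or_nonempty with rfl | hne
    · exact ⟨[], List.isChain_nil, by simp, by simp⟩
    · obtain ⟨m, hm, hmin⟩ := finset_exists_min htr s hne htot
      obtain ⟨l', hc', hn', hmem'⟩ := ih (s.erase m) (Finset.erase_ssubset hm)
        (fun x hx y hy => htot x (Finset.mem_of_mem_erase hx) y (Finset.mem_of_mem_erase hy))
      refine ⟨m :: l', ?_, ?_, ?_⟩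
      · refine List.isChain_cons.mpr ?_
        refine ⟨fun y hy => ?_, hc'⟩
        have hyl : y ∈ l' := by
          cases l' with
          | nil => simp at hy
          | cons z t => simp_all
        have := (hmem' y).mp hyl
        exact hmin y (Finset.mem_of_mem_erase this) (Finset.mem_erase.mp this).1
      · refine List.nodup_cons.mpr ⟨fun hml => ?_, hn'⟩
        exact (Finset.mem_erase.mp ((hmem' m).mp hml)).1 rfl
      · intro x
        simp only [List.mem_cons, hmem', Finset.mem_erase]
        constructor
        · rintro (rfl | ⟨_, h⟩) <;> [exact hm; exact h]
        · intro hx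
          by_cases hxm : x = m
          · exact Or.inl hxm
          · exact Or.inr ⟨hxm, hx⟩

end SortedLists
section ChainLists

open Classical

noncomputable def surround (π : Blocks) (V : Finset ℕ) : Blocks :=
  π.filter (fun W => NestedIn V W)

theorem mem_surround {π : Blocks} {V W : Finset ℕ} :
    W ∈ surround π V ↔ W ∈ π ∧ NestedIn V W := by simp [surround]

theorem surround_total {π : Blocks} (hNC : IsNC π) {V : Finset ℕ} (hV : V ∈ π) :
    ∀ X ∈ surround π V, ∀ Y ∈ surround π V, X ≠ Y → NestedIn X Y ∨ NestedIn Y X := by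
  intro X hX Y hY hXY
  obtain ⟨hXπ, hVX⟩ := mem_surround.mp hX
  obtain ⟨hYπ, hVY⟩ := mem_surround.mp hY
  rcases nested_total hNC (hNC.1 V hV) hXπ hYπ hXY hVX hVY with h | h
  · exact Or.inr h
  · exact Or.inl h

theorem nested_transitive : Transitive NestedIn := fun _ _ _ => nested_trans

theorem exists_least_surround {π : Blocks} (hNC : IsNC π) {V : Finset ℕ} (hV : V ∈ π)
    (hne : (surround π V).Nonempty) :
    ∃ W ∈ surround π V, ∀ X ∈ surround π V, X ≠ W → NestedIn W X :=
  finset_exists_min nested_transitive _ hne (surround_total hNC hV)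

theorem IsChainList.mem_iff {π : Blocks} {V : Finset ℕ} {L : List (Finset ℕ)}
    (h : IsChainList π V L) (x : Finset ℕ) :
    x ∈ L ↔ x = V ∨ (x ∈ π ∧ NestedIn V x) := by
  obtain ⟨h1, h2, _, _⟩ := h
  cases L with
  | nil => simp at h1
  | cons a t =>
    simp only [List.head?_cons, Option.some_inj] at h1
    subst h1
    simp only [List.mem_cons]
    constructor
    · rintro (rfl | hx)
      · exact Or.inl rfl
      · exact Or.inr ((h2 x).mp hx)
    · rintro (rfl | hx)
      · exact Or.inl rfl
      · exact Or.inr ((h2 x).mpr hx)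

theorem isChainList_unique {π : Blocks} {V : Finset ℕ} {L₁ L₂ : List (Finset ℕ)}
    (h1 : IsChainList π V L₁) (h2 : IsChainList π V L₂) : L₁ = L₂ := by
  refine chain_eq_of_mem_iff nested_transitive (fun a b => nested_asymm) L₁ L₂
    h1.2.2.1 h2.2.2.1 h1.2.2.2 h2.2.2.2 ?_
  intro x
  rw [h1.mem_iff x, h2.mem_iff x]

theorem exists_isChainList {π : Blocks} (hNC : IsNC π) {V : Finset ℕ} (hV : V ∈ π) :
    ∃ L, IsChainList π V L := by
  obtain ⟨l, hc, hn, hm⟩ := finset_exists_sorted nested_transitive (surround π V)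
    (surround_total hNC hV)
  refine ⟨V :: l, rfl, ?_, ?_, ?_⟩
  · intro W
    rw [List.tail_cons, hm W, mem_surround]
  · refine List.isChain_cons.mpr ?_
    refine ⟨fun y hy => ?_, hc⟩
    have : y ∈ l := List.mem_of_mem_head? hy
    exact (mem_surround.mp ((hm y).mp this)).2
  · refine List.nodup_cons.mpr ⟨fun hVl => ?_, hn⟩
    exact nested_irrefl (mem_surround.mp ((hm V).mp hVl)).2

noncomputable def chainL (π : Blocks) (V : Finset ℕ) : List (Finset ℕ) :=
  if h : ∃ L, IsChainList π V L then h.choose else []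

theorem isChainList_eq {π : Blocks} {V : Finset ℕ} {L : List (Finset ℕ)}
    (h : IsChainList π V L) : chainL π V = L := by
  have hex : ∃ L, IsChainList π V L := ⟨L, h⟩
  rw [chainL, dif_pos hex]
  exact isChainList_unique hex.choose_spec h

theorem chainL_spec {π : Blocks} (hNC : IsNC π) {V : Finset ℕ} (hV : V ∈ π) :
    IsChainList π V (chainL π V) := by
  obtain ⟨L, hL⟩ := exists_isChainList hNC hV
  rw [isChainList_eq hL]; exact hL

theorem chainL_mem_pi {π : Blocks} (hNC : IsNC π) {V : Finset ℕ} (hV : V ∈ π) :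
    ∀ X ∈ chainL π V, X ∈ π := by
  intro X hX
  rcases ((chainL_spec hNC hV).mem_iff X).mp hX with rfl | h
  · exact hV
  · exact h.1

theorem chainL_ne_nil {π : Blocks} (hNC : IsNC π) {V : Finset ℕ} (hV : V ∈ π) :
    chainL π V ≠ [] := by
  intro h
  have := (chainL_spec hNC hV).1
  rw [h] at this; simp at this

theorem chainL_head {π : Blocks} (hNC : IsNC π) {V : Finset ℕ} (hV : V ∈ π) :
    (chainL π V).head? = some V := (chainL_spec hNC hV).1

theorem surround_empty_chainL {π : Blocks} (hNC : IsNC π) {V : Finset ℕ} (hV : V ∈ π)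
    (h : ∀ X ∈ π, ¬ NestedIn V X) : chainL π V = [V] := by
  refine isChainList_eq ⟨rfl, ?_, ?_, ?_⟩
  · intro W
    simp only [List.tail_cons, List.not_mem_nil, false_iff]
    rintro ⟨hW, hn⟩
    exact h W hW hn
  · exact List.isChain_singleton _
  · simp

theorem chainL_cons {π : Blocks} (hNC : IsNC π) {V W : Finset ℕ} (hV : V ∈ π)
    (hW : W ∈ surround π V) (hmin : ∀ X ∈ surround π V, X ≠ W → NestedIn W X) :
    chainL π V = V :: chainL π W := by
  obtain ⟨hWπ, hVW⟩ := mem_surround.mp hW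
  have specW := chainL_spec hNC hWπ
  refine isChainList_eq ⟨rfl, ?_, ?_, ?_⟩
  · intro X
    rw [List.tail_cons, specW.mem_iff X]
    constructor
    · rintro (rfl | ⟨hX, hn⟩)
      · exact ⟨hWπ, hVW⟩
      · exact ⟨hX, nested_trans hVW hn⟩
    · rintro ⟨hX, hn⟩
      by_cases hXW : X = W
      · exact Or.inl hXW
      · exact Or.inr ⟨hX, hmin X (mem_surround.mpr ⟨hX, hn⟩) hXW⟩
  · refine List.isChain_cons.mpr ?_
    refine ⟨fun y hy => ?_, specW.2.2.1⟩
    rw [chainL_head hNC hWπ] at hy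
    simp only [Option.mem_def, Option.some_inj] at hy
    subst hy; exact hVW
  · refine List.nodup_cons.mpr ⟨fun hVl => ?_, specW.2.2.2⟩
    rcases (specW.mem_iff V).mp hVl with rfl | h
    · exact nested_irrefl hVW
    · exact nested_asymm hVW h.2

theorem isNC_erase {π : Blocks} (hNC : IsNC π) (V : Finset ℕ) : IsNC (π.erase V) :=
  isNC_subset hNC (Finset.erase_subset V π)

theorem chainL_erase {π : Blocks} (hNC : IsNC π) {V U : Finset ℕ}
    (hleaf : ∀ X ∈ π, ¬ NestedIn X V) (hU : U ∈ π.erase V) :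
    chainL (π.erase V) U = chainL π U := by
  have hUπ : U ∈ π := Finset.mem_of_mem_erase hU
  have spec := chainL_spec hNC hUπ
  refine isChainList_eq ⟨spec.1, ?_, spec.2.2.1, spec.2.2.2⟩
  intro W
  rw [spec.2.1 W]
  constructor
  · rintro ⟨hW, hn⟩
    refine ⟨Finset.mem_erase.mpr ⟨?_, hW⟩, hn⟩
    rintro rfl
    exact hleaf U hUπ hn
  · rintro ⟨hW, hn⟩
    exact ⟨Finset.mem_of_mem_erase hW, hn⟩

theorem weaklyCompatible_iff_chains {N : ℕ} (T : Set (List (Fin N))) {π : Blocks}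
    (hNC : IsNC π) (χ : Finset ℕ → Fin N) :
    WeaklyCompatible T π χ ↔ ∀ V ∈ π, red ((chainL π V).map χ) ∈ T := by
  constructor
  · intro h V hV
    exact h V hV _ (chainL_spec hNC hV)
  · intro h V hV L hL
    rw [← isChainList_eq hL]
    exact h V hV

theorem compat_congr {N : ℕ} (T : Set (List (Fin N))) {π : Blocks} (hNC : IsNC π)
    {χ₁ χ₂ : Finset ℕ → Fin N} (h : ∀ U ∈ π, χ₁ U = χ₂ U) :
    WeaklyCompatible T π χ₁ ↔ WeaklyCompatible T π χ₂ := by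
  rw [weaklyCompatible_iff_chains T hNC, weaklyCompatible_iff_chains T hNC]
  apply forall₂_congr
  intro V hV
  rw [List.map_congr_left (fun x hx => h x (chainL_mem_pi hNC hV x hx))]

end ChainLists
section Leaf

def IsLeaf (π : Blocks) (V : Finset ℕ) : Prop := ∀ U ∈ π, ¬ NestedIn U V

theorem exists_leaf {π : Blocks} (hNC : IsNC π) (hne : π.Nonempty) :
    ∃ V ∈ π, IsLeaf π V := by
  obtain ⟨V, hV, hmax⟩ := Finset.exists_max_image π (fun B => B.min) hne
  exact ⟨V, hV, fun U hU hn =>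
    absurd (hmax U hU) (not_le.mpr (nested_min_lt (hNC.1 U hU) hn))⟩

theorem immNested_erase {π : Blocks} {V X Y : Finset ℕ} (hleaf : IsLeaf π V)
    (hX : X ∈ π) : ImmNested π X Y ↔ ImmNested (π.erase V) X Y := by
  unfold ImmNested
  constructor
  · rintro ⟨hn, hblock⟩
    exact ⟨hn, fun ⟨Z, hZ, h1, h2⟩ => hblock ⟨Z, Finset.mem_of_mem_erase hZ, h1, h2⟩⟩
  · rintro ⟨hn, hblock⟩
    refine ⟨hn, fun ⟨Z, hZ, h1, h2⟩ => ?_⟩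
    by_cases hZV : Z = V
    · exact hleaf X hX (hZV ▸ h1)
    · exact hblock ⟨Z, Finset.mem_erase.mpr ⟨hZV, hZ⟩, h1, h2⟩

theorem adj_erase {π : Blocks} {V X Y : Finset ℕ} (hleaf : IsLeaf π V)
    (hX : X ∈ π) (hY : Y ∈ π) : AdjBlocks π X Y ↔ AdjBlocks (π.erase V) X Y := by
  unfold AdjBlocks
  rw [immNested_erase hleaf hX, immNested_erase hleaf hY]

section RTG

variable {α : Type*} {r r' : α → α → Prop} {v : α}

theorem rtg_avoid (hno : ∀ y, ¬ r v y ∧ ¬ r y v)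
    (hiff : ∀ x y, x ≠ v → y ≠ v → (r x y ↔ r' x y)) :
    ∀ {x y}, Relation.ReflTransGen r x y → x ≠ v →
      (y ≠ v ∧ Relation.ReflTransGen r' x y) := by
  intro x y h
  induction h with
  | refl => exact fun hx => ⟨hx, .refl⟩
  | @tail b c hab hbc ih =>
    intro hx
    obtain ⟨hbv, hab'⟩ := ih hx
    have hcv : c ≠ v := fun hc => (hno _).2 (hc ▸ hbc)
    exact ⟨hcv, hab'.tail ((hiff _ _ hbv hcv).mp hbc)⟩

theorem rtg_merge {w : α} (hvw : w ≠ v)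
    (honly : ∀ y, (r v y → y = w) ∧ (r y v → y = w))
    (hiff : ∀ x y, x ≠ v → y ≠ v → (r x y ↔ r' x y)) :
    ∀ {x y}, Relation.ReflTransGen r x y → x ≠ v →
      (y = v → Relation.ReflTransGen r' x w) ∧
      (y ≠ v → Relation.ReflTransGen r' x y) := by
  intro x y h
  induction h with
  | refl => exact fun hx => ⟨fun hxv => absurd hxv hx, fun _ => .refl⟩
  | @tail b c hab hbc ih =>
    intro hx
    by_cases hcv : c = v
    · subst hcv
      refine ⟨fun _ => ?_, fun hc => absurd rfl hc⟩
      have hb : b = w := (honly b).2 hbc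
      subst hb
      exact (ih hx).2 hvw
    · refine ⟨fun hc => absurd hc hcv, fun _ => ?_⟩
      by_cases hbv : b = v
      · subst hbv
        have hc : c = w := (honly c).1 hbc
        exact hc ▸ (ih hx).1 rfl
      · exact ((ih hx).2 hbv).tail ((hiff b c hbv hcv).mp hbc)

end RTG

theorem rtg_mono' {α : Type*} {r p : α → α → Prop} (h : ∀ a b, r a b → p a b) {a b : α}
    (hab : Relation.ReflTransGen r a b) : Relation.ReflTransGen p a b :=
  Relation.ReflTransGen.mono h _ _ hab

section Components

variable {N : ℕ} {π : Blocks} {χ : Finset ℕ → Fin N} {V : Finset ℕ}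

theorem sameComp_symm : Symmetric (sameComp π χ) := by
  intro A B h
  refine (@Relation.ReflTransGen.symmetric _ (fun X Y => X ∈ π ∧ Y ∈ π ∧ AdjBlocks π X Y ∧ χ X = χ Y) ⟨?_⟩).symm A B h
  rintro X Y ⟨h1, h2, h3, h4⟩
  exact ⟨h2, h1, h3.symm, h4.symm⟩

theorem edge_erase (hleaf : IsLeaf π V) {X Y : Finset ℕ} (hX : X ≠ V) (hY : Y ≠ V) :
    (X ∈ π ∧ Y ∈ π ∧ AdjBlocks π X Y ∧ χ X = χ Y) ↔
    (X ∈ π.erase V ∧ Y ∈ π.erase V ∧ AdjBlocks (π.erase V) X Y ∧ χ X = χ Y) := by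
  constructor
  · rintro ⟨h1, h2, h3, h4⟩
    exact ⟨Finset.mem_erase.mpr ⟨hX, h1⟩, Finset.mem_erase.mpr ⟨hY, h2⟩,
      (adj_erase hleaf h1 h2).mp h3, h4⟩
  · rintro ⟨h1, h2, h3, h4⟩
    have h1' := Finset.mem_of_mem_erase h1
    have h2' := Finset.mem_of_mem_erase h2
    exact ⟨h1', h2', (adj_erase hleaf h1' h2').mpr h3, h4⟩

theorem edge_at_leaf (hV : V ∈ π) (hleaf : IsLeaf π V) {W : Finset ℕ}
    (hW : W ∈ surround π V) (hmin : ∀ X ∈ surround π V, X ≠ W → NestedIn W X)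
    (Y : Finset ℕ) :
    ((V ∈ π ∧ Y ∈ π ∧ AdjBlocks π V Y ∧ χ V = χ Y) → Y = W) ∧
    ((Y ∈ π ∧ V ∈ π ∧ AdjBlocks π Y V ∧ χ Y = χ V) → Y = W) := by
  obtain ⟨hWπ, hVW⟩ := mem_surround.mp hW
  have key : ∀ Z, Z ∈ π → AdjBlocks π V Z → Z = W := by
    intro Z hZ hadj
    rcases hadj with ⟨hn, hblock⟩ | ⟨hn, _⟩
    · by_contra hZW
      exact hblock ⟨W, hWπ, hVW, hmin Z (mem_surround.mpr ⟨hZ, hn⟩) hZW⟩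
    · exact absurd hn (hleaf Z hZ)
  constructor
  · rintro ⟨_, hY, hadj, _⟩
    exact key Y hY hadj
  · rintro ⟨hY, _, hadj, _⟩
    exact key Y hY (Or.symm hadj)

theorem edge_V_W (hV : V ∈ π) (hleaf : IsLeaf π V) {W : Finset ℕ}
    (hW : W ∈ surround π V) (hmin : ∀ X ∈ surround π V, X ≠ W → NestedIn W X)
    (hχ : χ V = χ W) :
    V ∈ π ∧ W ∈ π ∧ AdjBlocks π V W ∧ χ V = χ W := by
  obtain ⟨hWπ, hVW⟩ := mem_surround.mp hW
  refine ⟨hV, hWπ, Or.inl ⟨hVW, ?_⟩, hχ⟩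
  rintro ⟨X, hX, h1, h2⟩
  by_cases hXW : X = W
  · exact nested_irrefl (hXW ▸ h2)
  · exact nested_asymm h2 (hmin X (mem_surround.mpr ⟨hX, h1⟩) hXW)

theorem no_edge_outer (hleaf : IsLeaf π V) (hout : ∀ X ∈ π, ¬ NestedIn V X)
    (hχV : True) (Y : Finset ℕ) :
    ¬ (V ∈ π ∧ Y ∈ π ∧ AdjBlocks π V Y ∧ χ V = χ Y) ∧
    ¬ (Y ∈ π ∧ V ∈ π ∧ AdjBlocks π Y V ∧ χ Y = χ V) := by
  have key : ∀ Z, Z ∈ π → ¬ AdjBlocks π V Z := by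
    rintro Z hZ (⟨hn, _⟩ | ⟨hn, _⟩)
    · exact hout Z hZ hn
    · exact hleaf Z hZ hn
  exact ⟨fun ⟨_, hY, hadj, _⟩ => key Y hY hadj,
    fun ⟨hY, _, hadj, _⟩ => key Y hY (Or.symm hadj)⟩

end Components
section CompStructure

variable {N : ℕ} {π : Blocks} {χ : Finset ℕ → Fin N} {V : Finset ℕ}

theorem mem_component {U Y : Finset ℕ} :
    Y ∈ component π χ U ↔ Y ∈ π ∧ sameComp π χ U Y := by
  simp [component]

theorem self_mem_component {U : Finset ℕ} (hU : U ∈ π) : U ∈ component π χ U :=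
  mem_component.mpr ⟨hU, Relation.ReflTransGen.refl⟩

/-- Non-merge case: no active edge at `V`. -/
theorem components_nonmerge (hV : V ∈ π) (hleaf : IsLeaf π V)
    (hno : ∀ Y, ¬ (V ∈ π ∧ Y ∈ π ∧ AdjBlocks π V Y ∧ χ V = χ Y) ∧
      ¬ (Y ∈ π ∧ V ∈ π ∧ AdjBlocks π Y V ∧ χ Y = χ V)) :
    components π χ = insert {V} (components (π.erase V) χ) := by
  have hiff2 : ∀ x y : Finset ℕ, x ≠ V → y ≠ V →
      ((x ∈ π ∧ y ∈ π ∧ AdjBlocks π x y ∧ χ x = χ y) ↔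
       (x ∈ π.erase V ∧ y ∈ π.erase V ∧ AdjBlocks (π.erase V) x y ∧ χ x = χ y)) :=
    fun x y hx hy => edge_erase hleaf hx hy
  have hcompV : component π χ V = {V} := by
    ext Y
    rw [mem_component, Finset.mem_singleton]
    constructor
    · rintro ⟨hY, hsame⟩
      rcases Relation.ReflTransGen.cases_head hsame with h | ⟨b, hb, _⟩
      · exact h.symm
      · exact absurd hb (hno b).1
    · rintro rfl
      exact ⟨hV, Relation.ReflTransGen.refl⟩
  have hcompU : ∀ U ∈ π.erase V, component π χ U = component (π.erase V) χ U := by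
    intro U hU
    have hUV : U ≠ V := (Finset.mem_erase.mp hU).1
    ext Y
    rw [mem_component, mem_component]
    constructor
    · rintro ⟨hY, hsame⟩
      obtain ⟨hYV, hsame'⟩ := rtg_avoid hno hiff2 hsame hUV
      exact ⟨Finset.mem_erase.mpr ⟨hYV, hY⟩, hsame'⟩
    · rintro ⟨hY, hsame⟩
      refine ⟨Finset.mem_of_mem_erase hY, ?_⟩
      exact rtg_mono' (fun x y h =>
        ⟨Finset.mem_of_mem_erase h.1, Finset.mem_of_mem_erase h.2.1,
          (adj_erase hleaf (Finset.mem_of_mem_erase h.1) (Finset.mem_of_mem_erase h.2.1)).mpr h.2.2.1,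
          h.2.2.2⟩) hsame
  have himg : components π χ = (insert V (π.erase V)).image (component π χ) := by
    rw [Finset.insert_erase hV]; rfl
  rw [himg, Finset.image_insert, hcompV]
  congr 1
  rw [components]
  exact Finset.image_congr (fun U hU => hcompU U hU)

theorem singleton_not_mem_components (hV : V ∈ π) :
    {V} ∉ components (π.erase V) χ := by
  intro h
  rw [components, Finset.mem_image] at h
  obtain ⟨U, hU, hcomp⟩ := h
  have : U ∈ component (π.erase V) χ U := self_mem_component hU
  rw [hcomp] at this
  exact (Finset.mem_erase.mp hU).1 (Finset.mem_singleton.mp this)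

/-- Merge case. -/
theorem components_merge (hNC : IsNC π) (hV : V ∈ π) (hleaf : IsLeaf π V)
    {W : Finset ℕ} (hW : W ∈ surround π V)
    (hmin : ∀ X ∈ surround π V, X ≠ W → NestedIn W X) (hχ : χ V = χ W) :
    components π χ =
      (components (π.erase V) χ).image (fun c => if W ∈ c then insert V c else c) := by
  obtain ⟨hWπ, hVW⟩ := mem_surround.mp hW
  have hWV : W ≠ V := fun h => nested_irrefl (h ▸ hVW)
  have hWe : W ∈ π.erase V := Finset.mem_erase.mpr ⟨hWV, hWπ⟩
  have hiff2 : ∀ x y : Finset ℕ, x ≠ V → y ≠ V →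
      ((x ∈ π ∧ y ∈ π ∧ AdjBlocks π x y ∧ χ x = χ y) ↔
       (x ∈ π.erase V ∧ y ∈ π.erase V ∧ AdjBlocks (π.erase V) x y ∧ χ x = χ y)) :=
    fun x y hx hy => edge_erase hleaf hx hy
  have honly := fun y => edge_at_leaf (χ := χ) hV hleaf hW hmin y
  have hrVW := edge_V_W hV hleaf hW hmin hχ
  have hrWV : W ∈ π ∧ V ∈ π ∧ AdjBlocks π W V ∧ χ W = χ V :=
    ⟨hrVW.2.1, hrVW.1, Or.symm hrVW.2.2.1, hrVW.2.2.2.symm⟩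
  have hmono : ∀ {x y}, sameComp (π.erase V) χ x y → sameComp π χ x y :=
    fun {x y} h => rtg_mono' (fun a b hab =>
      ⟨Finset.mem_of_mem_erase hab.1, Finset.mem_of_mem_erase hab.2.1,
        (adj_erase hleaf (Finset.mem_of_mem_erase hab.1)
          (Finset.mem_of_mem_erase hab.2.1)).mpr hab.2.2.1, hab.2.2.2⟩) h
  have hXV : ∀ X, X ≠ V → (sameComp π χ X V ↔ sameComp (π.erase V) χ X W) := by
    intro X hX
    constructor
    · intro h
      exact (rtg_merge hWV honly hiff2 h hX).1 rfl
    · intro h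
      exact Relation.ReflTransGen.tail (hmono h) hrWV
  have hXY : ∀ X Y, X ≠ V → Y ≠ V → (sameComp π χ X Y ↔ sameComp (π.erase V) χ X Y) := by
    intro X Y hX hY
    exact ⟨fun h => (rtg_merge hWV honly hiff2 h hX).2 hY, fun h => hmono h⟩
  have hWmem : ∀ U, W ∈ component (π.erase V) χ U ↔ sameComp (π.erase V) χ U W :=
    fun U => ⟨fun h => (mem_component.mp h).2, fun h => mem_component.mpr ⟨hWe, h⟩⟩
  have hcompU : ∀ U ∈ π.erase V, component π χ U =
      (fun c => if W ∈ c then insert V c else c) (component (π.erase V) χ U) := by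
    intro U hU
    have hUV : U ≠ V := (Finset.mem_erase.mp hU).1
    show component π χ U = if W ∈ component (π.erase V) χ U then
      insert V (component (π.erase V) χ U) else component (π.erase V) χ U
    by_cases hWc : W ∈ component (π.erase V) χ U
    · rw [if_pos hWc]
      ext Y
      by_cases hYV : Y = V
      · subst hYV
        rw [mem_component]
        simp only [Finset.mem_insert, true_or, iff_true]
        exact ⟨hV, (hXV U hUV).mpr ((hWmem U).mp hWc)⟩
      · rw [mem_component, Finset.mem_insert, mem_component]
        constructor
        · rintro ⟨hY, hsame⟩
          exact Or.inr ⟨Finset.mem_erase.mpr ⟨hYV, hY⟩, (hXY U Y hUV hYV).mp hsame⟩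
        · rintro (rfl | ⟨hY, hsame⟩)
          · exact absurd rfl hYV
          · exact ⟨Finset.mem_of_mem_erase hY, (hXY U Y hUV hYV).mpr hsame⟩
    · rw [if_neg hWc]
      ext Y
      rw [mem_component, mem_component]
      by_cases hYV : Y = V
      · subst hYV
        constructor
        · rintro ⟨_, hsame⟩
          exact absurd ((hWmem U).mpr ((hXV U hUV).mp hsame)) hWc
        · rintro ⟨hY, _⟩
          exact absurd (Finset.mem_erase.mp hY).1 (by simp)
      · constructor
        · rintro ⟨hY, hsame⟩
          exact ⟨Finset.mem_erase.mpr ⟨hYV, hY⟩, (hXY U Y hUV hYV).mp hsame⟩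
        · rintro ⟨hY, hsame⟩
          exact ⟨Finset.mem_of_mem_erase hY, (hXY U Y hUV hYV).mpr hsame⟩
  have hcompV : component π χ V =
      (fun c => if W ∈ c then insert V c else c) (component (π.erase V) χ W) := by
    have hWcompW : W ∈ component (π.erase V) χ W := self_mem_component hWe
    show component π χ V = if W ∈ component (π.erase V) χ W then
      insert V (component (π.erase V) χ W) else component (π.erase V) χ W
    rw [if_pos hWcompW]
    ext Y
    by_cases hYV : Y = V
    · subst hYV
      rw [mem_component]
      simp only [Finset.mem_insert, true_or, iff_true]
      exact ⟨hV, Relation.ReflTransGen.refl⟩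
    · rw [mem_component, Finset.mem_insert, mem_component]
      constructor
      · rintro ⟨hY, hsame⟩
        have hsame' : sameComp π χ Y V := sameComp_symm hsame
        exact Or.inr ⟨Finset.mem_erase.mpr ⟨hYV, hY⟩, sameComp_symm ((hXV Y hYV).mp hsame')⟩
      · rintro (rfl | ⟨hY, hsame⟩)
        · exact absurd rfl hYV
        · exact ⟨Finset.mem_of_mem_erase hY,
            sameComp_symm ((hXV Y hYV).mpr (sameComp_symm hsame))⟩
  have himg : components π χ = (insert V (π.erase V)).image (component π χ) := by
    rw [Finset.insert_erase hV]; rfl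
  rw [himg, Finset.image_insert, hcompV]
  have himg2 : (π.erase V).image (component π χ) =
      ((π.erase V).image (component (π.erase V) χ)).image
        (fun c => if W ∈ c then insert V c else c) := by
    rw [Finset.image_image]
    exact Finset.image_congr (fun U hU => hcompU U hU)
  rw [himg2]
  apply Finset.insert_eq_self.mpr
  exact Finset.mem_image_of_mem _ (Finset.mem_image_of_mem _ hWe)

end CompStructure
section InnerCount

open Classical

theorem innerCount_eq (τ : Blocks) :
    innerCount τ = (τ.filter (fun U => ∃ W ∈ τ, NestedIn U W)).card := by
  rw [innerCount, ← Set.ncard_coe_finset]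
  congr 1
  ext U
  simp

theorem innerCount_empty : innerCount ∅ = 0 := by
  rw [innerCount_eq]; simp

theorem innerCount_singleton (V : Finset ℕ) : innerCount {V} = 0 := by
  rw [innerCount_eq]
  rw [Finset.card_eq_zero, Finset.filter_eq_empty_iff]
  rintro U hU
  rw [Finset.mem_singleton] at hU
  subst hU
  rintro ⟨W, hW, hn⟩
  rw [Finset.mem_singleton] at hW
  subst hW
  exact nested_irrefl hn

theorem filter_inner_erase {π : Blocks} {V : Finset ℕ} (hleaf : IsLeaf π V) :
    (π.erase V).filter (fun U => ∃ W ∈ π.erase V, NestedIn U W) =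
    (π.filter (fun U => ∃ W ∈ π, NestedIn U W)).erase V := by
  ext U
  simp only [Finset.mem_filter, Finset.mem_erase]
  constructor
  · rintro ⟨⟨hUV, hU⟩, W, ⟨hWV, hW⟩, hn⟩
    exact ⟨hUV, hU, W, hW, hn⟩
  · rintro ⟨hUV, hU, W, hW, hn⟩
    refine ⟨⟨hUV, hU⟩, W, ⟨?_, hW⟩, hn⟩
    rintro rfl
    exact hleaf U hU hn

theorem innerCount_erase_inner {π : Blocks} {V : Finset ℕ} (hV : V ∈ π)
    (hleaf : IsLeaf π V) (hinner : ∃ W ∈ π, NestedIn V W) :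
    innerCount π = innerCount (π.erase V) + 1 := by
  rw [innerCount_eq, innerCount_eq, filter_inner_erase hleaf]
  have hVf : V ∈ π.filter (fun U => ∃ W ∈ π, NestedIn U W) :=
    Finset.mem_filter.mpr ⟨hV, hinner⟩
  rw [Finset.card_erase_of_mem hVf]
  have := Finset.card_pos.mpr ⟨V, hVf⟩
  omega

theorem innerCount_erase_outer {π : Blocks} {V : Finset ℕ}
    (hleaf : IsLeaf π V) (hout : ∀ W ∈ π, ¬ NestedIn V W) :
    innerCount π = innerCount (π.erase V) := by
  rw [innerCount_eq, innerCount_eq, filter_inner_erase hleaf,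
    Finset.erase_eq_of_notMem]
  rw [Finset.mem_filter]
  rintro ⟨_, W, hW, hn⟩
  exact hout W hW hn

theorem innerCount_insert_leaf {π c : Blocks} {V W : Finset ℕ} (hsub : c ⊆ π)
    (hleaf : IsLeaf π V) (hVc : V ∉ c) (hW : W ∈ c) (hVW : NestedIn V W) :
    innerCount (insert V c) = innerCount c + 1 := by
  rw [innerCount_eq, innerCount_eq]
  have hfil : (insert V c).filter (fun U => ∃ X ∈ insert V c, NestedIn U X) =
      insert V (c.filter (fun U => ∃ X ∈ c, NestedIn U X)) := by
    ext U
    simp only [Finset.mem_filter, Finset.mem_insert]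
    constructor
    · rintro ⟨(rfl | hU), X, hX, hn⟩
      · exact Or.inl rfl
      · refine Or.inr ⟨hU, X, ?_, hn⟩
        rcases hX with rfl | hX
        · exact absurd hn (hleaf U (hsub hU))
        · exact hX
    · rintro (rfl | ⟨hU, X, hX, hn⟩)
      · exact ⟨Or.inl rfl, W, Or.inr hW, hVW⟩
      · exact ⟨Or.inr hU, X, Or.inr hX, hn⟩
  rw [hfil, Finset.card_insert_of_notMem]
  intro h
  exact hVc (Finset.mem_filter.mp h).1

end InnerCount

section CompHelpers

open Classical

variable {N : ℕ} {π : Blocks} {χ χ₁ χ₂ : Finset ℕ → Fin N}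

theorem component_eq_of_mem {U₁ U₂ Y : Finset ℕ} (h1 : Y ∈ component π χ U₁)
    (h2 : Y ∈ component π χ U₂) : component π χ U₁ = component π χ U₂ := by
  rw [mem_component] at h1 h2
  ext Z
  rw [mem_component, mem_component]
  constructor
  · rintro ⟨hZ, hs⟩
    exact ⟨hZ, Relation.ReflTransGen.trans (Relation.ReflTransGen.trans h2.2 (sameComp_symm h1.2)) hs⟩
  · rintro ⟨hZ, hs⟩
    exact ⟨hZ, Relation.ReflTransGen.trans (Relation.ReflTransGen.trans h1.2 (sameComp_symm h2.2)) hs⟩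

theorem component_subset {U : Finset ℕ} : component π χ U ⊆ π :=
  Finset.filter_subset _ _

theorem components_congr (h : ∀ U ∈ π, χ₁ U = χ₂ U) :
    components π χ₁ = components π χ₂ := by
  have hsame : ∀ A B, sameComp π χ₁ A B ↔ sameComp π χ₂ A B := by
    have key : ∀ A B : Finset ℕ,
        (A ∈ π ∧ B ∈ π ∧ AdjBlocks π A B ∧ χ₁ A = χ₁ B) ↔
        (A ∈ π ∧ B ∈ π ∧ AdjBlocks π A B ∧ χ₂ A = χ₂ B) := by
      intro A B
      constructor
      · rintro ⟨h1, h2, h3, h4⟩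
        exact ⟨h1, h2, h3, by rw [← h A h1, ← h B h2]; exact h4⟩
      · rintro ⟨h1, h2, h3, h4⟩
        exact ⟨h1, h2, h3, by rw [h A h1, h B h2]; exact h4⟩
    intro A B
    exact ⟨rtg_mono' (fun x y hxy => (key x y).mp hxy),
      rtg_mono' (fun x y hxy => (key x y).mpr hxy)⟩
  unfold components
  apply Finset.image_congr
  intro U _
  unfold component
  apply Finset.filter_congr
  intro Y _
  simp [hsame U Y]

theorem mem_components {τ : Blocks} :
    τ ∈ components π χ ↔ ∃ U ∈ π, component π χ U = τ := by
  simp [components]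

theorem components_subset {τ : Blocks} (h : τ ∈ components π χ) : τ ⊆ π := by
  obtain ⟨U, _, rfl⟩ := mem_components.mp h
  exact component_subset

end CompHelpers
section SumSetup

open Classical

variable {N : ℕ} [NeZero N]

noncomputable def blockSum (T : Set (List (Fin N))) (g : Blocks → ℝ) (π : Blocks) : ℝ :=
  ∑ χ : ({V : Finset ℕ // V ∈ π} → Fin N),
    if WeaklyCompatible T π (extendColor π χ) then
      ∏ τ ∈ components π (extendColor π χ), g τ
    else 0

theorem cumulantRHS_eq_blockSum (n : ℕ) (T : Set (List (Fin N))) (a : Blocks → ℝ)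
    (π : Blocks) : cumulantRHS n T a π = blockSum T a π / (n : ℝ) ^ π.card := rfl

noncomputable def glueEquiv (π : Blocks) (V : Finset ℕ) (hV : V ∈ π) :
    ({U : Finset ℕ // U ∈ π} → Fin N) ≃ (Fin N × ({U : Finset ℕ // U ∈ π.erase V} → Fin N)) where
  toFun χ := (χ ⟨V, hV⟩, fun u => χ ⟨u.1, Finset.mem_of_mem_erase u.2⟩)
  invFun p := fun u => if h : u.1 = V then p.1 else p.2 ⟨u.1, Finset.mem_erase.mpr ⟨h, u.2⟩⟩
  left_inv χ := by
    funext u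
    by_cases h : u.1 = V
    · simp only [dif_pos h]
      congr 1
      exact Subtype.ext h.symm
    · simp only [dif_neg h]
  right_inv p := by
    refine Prod.ext ?_ ?_
    · simp
    · funext u
      have h : u.1 ≠ V := (Finset.mem_erase.mp u.2).1
      simp [dif_neg h]

theorem extend_glue_agree {π : Blocks} {V : Finset ℕ} (hV : V ∈ π)
    (p : Fin N × ({U : Finset ℕ // U ∈ π.erase V} → Fin N)) :
    ∀ U ∈ π.erase V, extendColor π ((glueEquiv π V hV).symm p) U =
      extendColor (π.erase V) p.2 U := by
  intro U hU
  have hUπ : U ∈ π := Finset.mem_of_mem_erase hU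
  have hUV : U ≠ V := (Finset.mem_erase.mp hU).1
  rw [extendColor, extendColor, dif_pos hUπ, dif_pos hU]
  show (if h : U = V then p.1 else p.2 ⟨U, _⟩) = p.2 ⟨U, hU⟩
  rw [dif_neg hUV]

theorem extend_glue_V {π : Blocks} {V : Finset ℕ} (hV : V ∈ π)
    (p : Fin N × ({U : Finset ℕ // U ∈ π.erase V} → Fin N)) :
    extendColor π ((glueEquiv π V hV).symm p) V = p.1 := by
  rw [extendColor, dif_pos hV]
  show (if h : V = V then p.1 else _) = p.1
  rw [dif_pos rfl]

theorem compat_erase_iff {π : Blocks} {V : Finset ℕ} (T : Set (List (Fin N)))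
    (hNC : IsNC π) (hV : V ∈ π) (hleaf : IsLeaf π V) (χ : Finset ℕ → Fin N) :
    WeaklyCompatible T π χ ↔
      WeaklyCompatible T (π.erase V) χ ∧ red ((chainL π V).map χ) ∈ T := by
  rw [weaklyCompatible_iff_chains T hNC, weaklyCompatible_iff_chains T (isNC_erase hNC V)]
  constructor
  · intro h
    refine ⟨fun U hU => ?_, h V hV⟩
    rw [chainL_erase hNC hleaf hU]
    exact h U (Finset.mem_of_mem_erase hU)
  · rintro ⟨h1, h2⟩ U hU
    by_cases hUV : U = V
    · subst hUV; exact h2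
    · have := h1 U (Finset.mem_erase.mpr ⟨hUV, hU⟩)
      rwa [chainL_erase hNC hleaf (Finset.mem_erase.mpr ⟨hUV, hU⟩)] at this

theorem prod_components_merge {π : Blocks} {χ : Finset ℕ → Fin N} {V W : Finset ℕ}
    (hleaf : IsLeaf π V) (hVπ : V ∈ π) (hVW : NestedIn V W)
    (hWe : W ∈ π.erase V) (x : ℝ) :
    ∏ τ ∈ (components (π.erase V) χ).image (fun c => if W ∈ c then insert V c else c),
        x ^ innerCount τ
      = x * ∏ τ ∈ components (π.erase V) χ, x ^ innerCount τ := by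
  set π' := π.erase V with hπ'
  have hVnot : ∀ c ∈ components π' χ, V ∉ c := by
    intro c hc hmem
    exact (Finset.mem_erase.mp (components_subset hc hmem)).1 rfl
  have hinj : ∀ c₁ ∈ components π' χ, ∀ c₂ ∈ components π' χ,
      (if W ∈ c₁ then insert V c₁ else c₁) = (if W ∈ c₂ then insert V c₂ else c₂) → c₁ = c₂ := by
    intro c₁ h₁ c₂ h₂ heq
    by_cases hW1 : W ∈ c₁ <;> by_cases hW2 : W ∈ c₂
    · rw [if_pos hW1, if_pos hW2] at heq
      ext Y
      constructor
      · intro hY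
        have : Y ∈ insert V c₂ := heq ▸ Finset.mem_insert_of_mem hY
        rcases Finset.mem_insert.mp this with rfl | h
        · exact absurd hY (hVnot c₁ h₁)
        · exact h
      · intro hY
        have : Y ∈ insert V c₁ := heq.symm ▸ Finset.mem_insert_of_mem hY
        rcases Finset.mem_insert.mp this with rfl | h
        · exact absurd hY (hVnot c₂ h₂)
        · exact h
    · rw [if_pos hW1, if_neg hW2] at heq
      exact absurd (heq ▸ Finset.mem_insert_self V c₁) (hVnot c₂ h₂)
    · rw [if_neg hW1, if_pos hW2] at heq
      exact absurd (heq.symm ▸ Finset.mem_insert_self V c₂) (hVnot c₁ h₁)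
    · rw [if_neg hW1, if_neg hW2] at heq
      exact heq
  rw [Finset.prod_image (fun c hc c' hc' h => hinj c hc c' hc' h)]
  have hcW : component π' χ W ∈ components π' χ := Finset.mem_image_of_mem _ hWe
  rw [← Finset.mul_prod_erase _ _ hcW, ← Finset.mul_prod_erase _ _ hcW]
  have hWin : W ∈ component π' χ W := self_mem_component hWe
  have h1 : (if W ∈ component π' χ W then insert V (component π' χ W) else component π' χ W)
      = insert V (component π' χ W) := if_pos hWin
  have h2 : innerCount (insert V (component π' χ W)) = innerCount (component π' χ W) + 1 := by
    refine innerCount_insert_leaf ?_ hleaf ?_ hWin hVW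
    · exact fun Y hY => Finset.mem_of_mem_erase (component_subset hY)
    · exact hVnot _ hcW
  have h3 : ∀ c ∈ (components π' χ).erase (component π' χ W),
      (if W ∈ c then insert V c else c) = c := by
    intro c hc
    rw [if_neg]
    intro hWc
    obtain ⟨U, hU, rfl⟩ := mem_components.mp (Finset.mem_of_mem_erase hc)
    exact (Finset.mem_erase.mp hc).1 (component_eq_of_mem hWc hWin)
  rw [Finset.prod_congr rfl (fun c hc => by rw [h3 c hc])] at *
  simp only [h1, h2]
  rw [pow_succ]
  ring

end SumSetup
section CoreSums

open Classical

variable {N : ℕ} [NeZero N]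

theorem ncard_eq_filter_card (P : Fin N → Prop) :
    {j : Fin N | P j}.ncard = (Finset.univ.filter P).card := by
  rw [show {j : Fin N | P j} = ↑(Finset.univ.filter P) by ext j; simp,
    Set.ncard_coe_finset]

theorem inner_sum_outer {n : ℕ} {π : Blocks} {V : Finset ℕ} (T : Set (List (Fin N)))
    (hroot : {j : Fin N | [j] ∈ T}.ncard = n)
    (hNC : IsNC π) (hV : V ∈ π) (hleaf : IsLeaf π V)
    (hout : ∀ X ∈ π, ¬ NestedIn V X) (x : ℝ)
    (χ' : {U : Finset ℕ // U ∈ π.erase V} → Fin N) :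
    (∑ c : Fin N,
      if WeaklyCompatible T π (extendColor π ((glueEquiv π V hV).symm (c, χ'))) then
        ∏ τ ∈ components π (extendColor π ((glueEquiv π V hV).symm (c, χ'))), x ^ innerCount τ
      else 0)
    = (n : ℝ) * (if WeaklyCompatible T (π.erase V) (extendColor (π.erase V) χ') then
        ∏ τ ∈ components (π.erase V) (extendColor (π.erase V) χ'), x ^ innerCount τ
      else 0) := by
  set χe := extendColor (π.erase V) χ' with hχe
  set P' := ∏ τ ∈ components (π.erase V) χe, x ^ innerCount τ with hP'
  have hterm : ∀ c : Fin N,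
      (if WeaklyCompatible T π (extendColor π ((glueEquiv π V hV).symm (c, χ'))) then
        ∏ τ ∈ components π (extendColor π ((glueEquiv π V hV).symm (c, χ'))), x ^ innerCount τ
      else 0)
      = if WeaklyCompatible T (π.erase V) χe ∧ [c] ∈ T then P' else 0 := by
    intro c
    set χf := extendColor π ((glueEquiv π V hV).symm (c, χ')) with hχf
    have hagree : ∀ U ∈ π.erase V, χf U = χe U := extend_glue_agree hV (c, χ')
    have hfV : χf V = c := extend_glue_V hV (c, χ')
    have hcompat : WeaklyCompatible T π χf ↔
        (WeaklyCompatible T (π.erase V) χe ∧ [c] ∈ T) := by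
      rw [compat_erase_iff T hNC hV hleaf, compat_congr T (isNC_erase hNC V) hagree,
        surround_empty_chainL hNC hV hout]
      simp only [List.map_cons, List.map_nil, hfV]
      rw [show red [c] = [c] from rfl]
    have hcomps : components π χf = insert {V} (components (π.erase V) χe) := by
      rw [components_nonmerge hV hleaf (fun Y => no_edge_outer hleaf hout trivial Y),
        components_congr hagree]
    rw [hcompat, hcomps]
    by_cases h : WeaklyCompatible T (π.erase V) χe ∧ [c] ∈ T
    · rw [if_pos h, if_pos h, Finset.prod_insert (singleton_not_mem_components hV),
        innerCount_singleton, pow_zero, one_mul]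
    · rw [if_neg h, if_neg h]
  rw [Finset.sum_congr rfl (fun c _ => hterm c)]
  by_cases hc : WeaklyCompatible T (π.erase V) χe
  · have : ∀ c : Fin N, (if WeaklyCompatible T (π.erase V) χe ∧ [c] ∈ T then P' else 0)
        = if [c] ∈ T then P' else 0 := by
      intro c
      by_cases h2 : [c] ∈ T
      · rw [if_pos ⟨hc, h2⟩, if_pos h2]
      · rw [if_neg (fun hh => h2 hh.2), if_neg h2]
    rw [Finset.sum_congr rfl (fun c _ => this c), Finset.sum_ite, Finset.sum_const,
      Finset.sum_const, if_pos hc]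
    have hcard : (Finset.univ.filter (fun c : Fin N => [c] ∈ T)).card = n := by
      rw [← ncard_eq_filter_card]; exact hroot
    rw [hcard]
    simp [nsmul_eq_mul]
  · rw [if_neg hc]
    rw [Finset.sum_congr rfl (fun c _ => if_neg (fun hh => hc hh.1))]
    simp

theorem inner_sum_inner {d : ℕ} {π : Blocks} {V W : Finset ℕ} (T : Set (List (Fin N)))
    (hT : IsRootedSubtree T)
    (hreg : ∀ s ∈ T, s ≠ [] → {j : Fin N | j :: s ∈ T}.ncard = d)
    (hNC : IsNC π) (hV : V ∈ π) (hleaf : IsLeaf π V)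
    (hW : W ∈ surround π V) (hmin : ∀ X ∈ surround π V, X ≠ W → NestedIn W X) (x : ℝ)
    (χ' : {U : Finset ℕ // U ∈ π.erase V} → Fin N) :
    (∑ c : Fin N,
      if WeaklyCompatible T π (extendColor π ((glueEquiv π V hV).symm (c, χ'))) then
        ∏ τ ∈ components π (extendColor π ((glueEquiv π V hV).symm (c, χ'))), x ^ innerCount τ
      else 0)
    = (x + (d : ℝ)) * (if WeaklyCompatible T (π.erase V) (extendColor (π.erase V) χ') then
        ∏ τ ∈ components (π.erase V) (extendColor (π.erase V) χ'), x ^ innerCount τ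
      else 0) := by
  obtain ⟨hWπ, hVW⟩ := mem_surround.mp hW
  have hWV : W ≠ V := fun h => nested_irrefl (h ▸ hVW)
  have hWe : W ∈ π.erase V := Finset.mem_erase.mpr ⟨hWV, hWπ⟩
  have hNC' : IsNC (π.erase V) := isNC_erase hNC V
  set χe := extendColor (π.erase V) χ' with hχe
  set P' := ∏ τ ∈ components (π.erase V) χe, x ^ innerCount τ with hP'
  set w := χe W with hw
  set s := red ((chainL (π.erase V) W).map χe) with hs
  have hchainV : chainL π V = V :: chainL (π.erase V) W := by
    rw [chainL_cons hNC hV hW hmin, chainL_erase hNC hleaf hWe]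
  have hlWne : (chainL (π.erase V) W).map χe ≠ [] := by
    simp [chainL_ne_nil hNC' hWe]
  have hshead : ((chainL (π.erase V) W).map χe).head? = some w := by
    rw [List.head?_map, chainL_head hNC' hWe]; rfl
  -- this branch splits on compatibility of χ'
  by_cases hcompat' : WeaklyCompatible T (π.erase V) χe
  swap
  · -- incompatible: everything is 0
    rw [if_neg hcompat']
    rw [Finset.sum_congr rfl (fun c _ => ?_), Finset.sum_const_zero, mul_zero]
    set χf := extendColor π ((glueEquiv π V hV).symm (c, χ')) with hχf
    have hagree : ∀ U ∈ π.erase V, χf U = χe U := extend_glue_agree hV (c, χ')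
    rw [if_neg]
    intro hcf
    exact hcompat' ((compat_congr T hNC' hagree).mp
      ((compat_erase_iff T hNC hV hleaf χf).mp hcf).1)
  · rw [if_pos hcompat']
    have hsT : s ∈ T := (weaklyCompatible_iff_chains T hNC' χe).mp hcompat' W hWe
    have hsne : s ≠ [] := red_ne_nil hlWne
    have hshead' : s.head? = some w := by rw [hs, head?_red, hshead]
    have hterm : ∀ c : Fin N,
        (if WeaklyCompatible T π (extendColor π ((glueEquiv π V hV).symm (c, χ'))) then
          ∏ τ ∈ components π (extendColor π ((glueEquiv π V hV).symm (c, χ'))), x ^ innerCount τ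
        else 0)
        = if c = w then x * P' else (if (c :: s) ∈ T then P' else 0) := by
      intro c
      set χf := extendColor π ((glueEquiv π V hV).symm (c, χ')) with hχf
      have hagree : ∀ U ∈ π.erase V, χf U = χe U := extend_glue_agree hV (c, χ')
      have hfV : χf V = c := extend_glue_V hV (c, χ')
      have hfW : χf W = w := by rw [hagree W hWe]
      have hmap : (chainL π V).map χf = c :: ((chainL (π.erase V) W).map χe) := by
        rw [hchainV, List.map_cons, hfV]
        congr 1
        exact List.map_congr_left (fun X hX => hagree X (chainL_mem_pi hNC' hWe X hX))
      have hred : red ((chainL π V).map χf) = if c = w then s else c :: s := by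
        rw [hmap, red_cons, hshead]
        by_cases hcw : c = w
        · rw [if_pos (by rw [hcw]), if_pos hcw, hs]
        · rw [if_neg (by simpa [eq_comm] using hcw), if_neg hcw, hs]
      have hcompat : WeaklyCompatible T π χf ↔
          (WeaklyCompatible T (π.erase V) χe ∧ red ((chainL π V).map χf) ∈ T) := by
        rw [compat_erase_iff T hNC hV hleaf, compat_congr T hNC' hagree]
      by_cases hcw : c = w
      · -- merge case
        have hχVW : χf V = χf W := by rw [hfV, hfW, hcw]
        have hcomps : components π χf =
            (components (π.erase V) χe).image (fun cc => if W ∈ cc then insert V cc else cc) := by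
          rw [components_merge hNC hV hleaf hW hmin hχVW, components_congr hagree]
        rw [if_pos hcw]
        rw [hcompat, hred, if_pos hcw]
        rw [if_pos ⟨hcompat', hsT⟩, hcomps]
        exact prod_components_merge hleaf hV hVW hWe x
      · -- non-merge case
        have hno : ∀ Y, ¬ (V ∈ π ∧ Y ∈ π ∧ AdjBlocks π V Y ∧ χf V = χf Y) ∧
            ¬ (Y ∈ π ∧ V ∈ π ∧ AdjBlocks π Y V ∧ χf Y = χf V) := by
          intro Y
          constructor
          · intro hr
            have hYW := (edge_at_leaf hV hleaf hW hmin Y).1 hr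
            subst hYW
            exact hcw (by rw [← hfV, hr.2.2.2, hfW])
          · intro hr
            have hYW := (edge_at_leaf hV hleaf hW hmin Y).2 hr
            subst hYW
            exact hcw (by rw [← hfV, ← hr.2.2.2, hfW])
        have hcomps : components π χf = insert {V} (components (π.erase V) χe) := by
          rw [components_nonmerge hV hleaf hno, components_congr hagree]
        rw [if_neg hcw]
        rw [hcompat, hred, if_neg hcw]
        by_cases hcs : (c :: s) ∈ T
        · rw [if_pos ⟨hcompat', hcs⟩, if_pos hcs, hcomps,
            Finset.prod_insert (singleton_not_mem_components hV),
            innerCount_singleton, pow_zero, one_mul]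
        · rw [if_neg (fun hh => hcs hh.2), if_neg hcs]
    rw [Finset.sum_congr rfl (fun c _ => hterm c)]
    rw [← Finset.add_sum_erase _ _ (Finset.mem_univ w)]
    rw [if_pos rfl]
    have hrest : ∀ c ∈ Finset.univ.erase w,
        (if c = w then x * P' else (if (c :: s) ∈ T then P' else 0))
        = if (c :: s) ∈ T then P' else 0 := by
      intro c hc
      rw [if_neg (Finset.mem_erase.mp hc).1]
    rw [Finset.sum_congr rfl hrest, Finset.sum_ite, Finset.sum_const, Finset.sum_const_zero,
      add_zero]
    have hfilter : (Finset.univ.erase w).filter (fun c => (c :: s) ∈ T) =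
        Finset.univ.filter (fun c : Fin N => (c :: s) ∈ T) := by
      ext c
      simp only [Finset.mem_filter, Finset.mem_erase, Finset.mem_univ, true_and, and_true]
      constructor
      · rintro ⟨_, h⟩; exact h
      · intro h
        refine ⟨?_, h⟩
        have hchain := hT.1 _ h
        cases hl : s with
        | nil => exact absurd hl hsne
        | cons y t =>
          rw [hl] at hchain
          have hy : y = w := by
            have := hshead'
            rw [hl] at this
            simpa using this
          replace hchain := List.isChain_cons_cons.mp hchain
          rw [← hy]
          exact hchain.1
    rw [hfilter]
    have hcard : (Finset.univ.filter (fun c : Fin N => (c :: s) ∈ T)).card = d := by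
      rw [← ncard_eq_filter_card]; exact hreg s hsT hsne
    rw [hcard]
    simp [nsmul_eq_mul]
    ring

end CoreSums
section KeyIdentity

open Classical

variable {N : ℕ} [NeZero N]

theorem key_identity (n d : ℕ) (hn2 : 2 ≤ n) (T : Set (List (Fin N)))
    (hT : IsRootedSubtree T)
    (hroot : {j : Fin N | [j] ∈ T}.ncard = n)
    (hreg : ∀ s ∈ T, s ≠ [] → {j : Fin N | j :: s ∈ T}.ncard = d) :
    ∀ π : Blocks, IsNC π →
      blockSum T (fun τ => ((d : ℝ) / ((n : ℝ) - 1)) ^ innerCount τ) π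
        = (n : ℝ) ^ π.card * ((d : ℝ) / ((n : ℝ) - 1)) ^ innerCount π := by
  have hn1 : ((n : ℝ) - 1) ≠ 0 := by
    have : (2 : ℝ) ≤ (n : ℝ) := by exact_mod_cast hn2
    linarith
  set x : ℝ := (d : ℝ) / ((n : ℝ) - 1) with hx
  have hxd : x + (d : ℝ) = (n : ℝ) * x := by
    rw [hx]
    field_simp
    ring
  intro π
  induction π using Finset.strongInduction with
  | _ π ih =>
    intro hNC
    rcases π.eq_empty_or_nonempty with rfl | hne
    · -- base case
      haveI : IsEmpty {U : Finset ℕ // U ∈ (∅ : Blocks)} := ⟨fun u => absurd u.2 (Finset.notMem_empty u.1)⟩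
      have hval : ∀ χ : ({U : Finset ℕ // U ∈ (∅ : Blocks)} → Fin N),
          (if WeaklyCompatible T ∅ (extendColor ∅ χ) then
            ∏ τ ∈ components ∅ (extendColor ∅ χ), x ^ innerCount τ
          else 0) = 1 := by
        intro χ
        rw [if_pos]
        · rw [components, Finset.image_empty, Finset.prod_empty]
        · intro B hB
          simp at hB
      rw [blockSum, Finset.sum_congr rfl (fun χ _ => hval χ), Finset.sum_const]
      haveI : Unique ({U : Finset ℕ // U ∈ (∅ : Blocks)} → Fin N) := Pi.uniqueOfIsEmpty _
      rw [Finset.card_univ, Fintype.card_unique]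
      simp [innerCount_empty]
    · obtain ⟨V, hV, hleaf⟩ := exists_leaf hNC hne
      have hNC' : IsNC (π.erase V) := isNC_erase hNC V
      have hcard : π.card = (π.erase V).card + 1 := (Finset.card_erase_add_one hV).symm
      have ih' := ih (π.erase V) (Finset.erase_ssubset hV) hNC'
      have hsplit : blockSum T (fun τ => x ^ innerCount τ) π =
          ∑ χ' : ({U : Finset ℕ // U ∈ π.erase V} → Fin N), ∑ c : Fin N,
            (if WeaklyCompatible T π (extendColor π ((glueEquiv π V hV).symm (c, χ'))) then
              ∏ τ ∈ components π (extendColor π ((glueEquiv π V hV).symm (c, χ'))),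
                x ^ innerCount τ
            else 0) := by
        rw [blockSum, ← Equiv.sum_comp (glueEquiv π V hV).symm
          (fun χ => if WeaklyCompatible T π (extendColor π χ) then
            ∏ τ ∈ components π (extendColor π χ), x ^ innerCount τ else 0),
          Fintype.sum_prod_type_right]
      rcases (surround π V).eq_empty_or_nonempty with hsur | hsur
      · -- outer leaf
        have hout : ∀ X ∈ π, ¬ NestedIn V X := by
          intro X hX hn
          have : X ∈ surround π V := mem_surround.mpr ⟨hX, hn⟩
          rw [hsur] at this
          simp at this
        rw [hsplit, Finset.sum_congr rfl
          (fun χ' _ => inner_sum_outer T hroot hNC hV hleaf hout x χ'),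
          ← Finset.mul_sum]
        rw [show (∑ χ' : ({U : Finset ℕ // U ∈ π.erase V} → Fin N),
          if WeaklyCompatible T (π.erase V) (extendColor (π.erase V) χ') then
            ∏ τ ∈ components (π.erase V) (extendColor (π.erase V) χ'), x ^ innerCount τ
          else 0) = blockSum T (fun τ => x ^ innerCount τ) (π.erase V) from rfl]
        rw [ih', hcard, ← innerCount_erase_outer hleaf hout, pow_succ]
        ring
      · -- inner leaf
        obtain ⟨W, hW, hmin⟩ := exists_least_surround hNC hV hsur
        rw [hsplit, Finset.sum_congr rfl
          (fun χ' _ => inner_sum_inner T hT hreg hNC hV hleaf hW hmin x χ'),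
          ← Finset.mul_sum]
        rw [show (∑ χ' : ({U : Finset ℕ // U ∈ π.erase V} → Fin N),
          if WeaklyCompatible T (π.erase V) (extendColor (π.erase V) χ') then
            ∏ τ ∈ components (π.erase V) (extendColor (π.erase V) χ'), x ^ innerCount τ
          else 0) = blockSum T (fun τ => x ^ innerCount τ) (π.erase V) from rfl]
        have hinner : ∃ X ∈ π, NestedIn V X := by
          obtain ⟨hWπ, hVW⟩ := mem_surround.mp hW
          exact ⟨W, hWπ, hVW⟩
        rw [ih', hcard, innerCount_erase_inner hV hleaf hinner, hxd, pow_succ, pow_succ]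
        ring

end KeyIdentity
section Final

open Classical

variable {N : ℕ} [NeZero N]

theorem sameComp_color {π : Blocks} {χ : Finset ℕ → Fin N} {A B : Finset ℕ}
    (h : sameComp π χ A B) : χ A = χ B := by
  induction h with
  | refl => rfl
  | tail _ hbc ih => rw [ih, hbc.2.2.2]

theorem components_eq_singleton_of_mem {π : Blocks} {χ : Finset ℕ → Fin N}
    (h : π ∈ components π χ) : components π χ = {π} := by
  obtain ⟨U₀, hU₀, hcomp⟩ := mem_components.mp h
  ext τ
  rw [Finset.mem_singleton, mem_components]
  constructor
  · rintro ⟨U, hU, rfl⟩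
    rw [component_eq_of_mem (self_mem_component hU) (by rw [hcomp]; exact hU), hcomp]
  · rintro rfl
    exact ⟨U₀, hU₀, hcomp⟩

theorem innerCount_card_one {π : Blocks} (h : π.card = 1) : innerCount π = 0 := by
  obtain ⟨B, rfl⟩ := Finset.card_eq_one.mp h
  exact innerCount_singleton B

theorem extendColor_mem {π : Blocks} (χ : {U : Finset ℕ // U ∈ π} → Fin N)
    {U : Finset ℕ} (hU : U ∈ π) : extendColor π χ U = χ ⟨U, hU⟩ := dif_pos hU

theorem stmt13_aux (n d : ℕ) (hn2 : 2 ≤ n)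
    (T : Set (List (Fin N))) (hT : IsRootedSubtree T)
    (hroot : {j : Fin N | [j] ∈ T}.ncard = n)
    (hreg : ∀ s ∈ T, s ≠ [] → {j : Fin N | j :: s ∈ T}.ncard = d)
    (a : Blocks → ℝ) (ha : SatisfiesFP n T a) :
    ∀ π : Blocks, IsNC π →
      a π = ((d : ℝ) / ((n : ℝ) - 1)) ^ innerCount π := by
  have hn0 : (0 : ℝ) < (n : ℝ) := by
    have : (2 : ℝ) ≤ (n : ℝ) := by exact_mod_cast hn2
    linarith
  set x : ℝ := (d : ℝ) / ((n : ℝ) - 1) with hx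
  intro π
  induction π using Finset.strongInduction with
  | _ π ih =>
    intro hNC
    rcases Nat.lt_or_ge π.card 2 with hm | hm
    · interval_cases h : π.card
      · -- empty
        have hπ : π = ∅ := Finset.card_eq_zero.mp h
        subst hπ
        have hFP0 := ha.2 ∅ hNC
        rw [cumulantRHS_eq_blockSum] at hFP0
        haveI : IsEmpty {U : Finset ℕ // U ∈ (∅ : Blocks)} :=
          ⟨fun u => absurd u.2 (Finset.notMem_empty u.1)⟩
        have hval : ∀ χ : ({U : Finset ℕ // U ∈ (∅ : Blocks)} → Fin N),
            (if WeaklyCompatible T ∅ (extendColor ∅ χ) then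
              ∏ τ ∈ components ∅ (extendColor ∅ χ), a τ
            else 0) = 1 := by
          intro χ
          rw [if_pos]
          · rw [components, Finset.image_empty, Finset.prod_empty]
          · intro B hB
            simp at hB
        haveI : Unique ({U : Finset ℕ // U ∈ (∅ : Blocks)} → Fin N) := Pi.uniqueOfIsEmpty _
        have hbs : blockSum T a (∅ : Blocks) = 1 := by
          rw [blockSum, Finset.sum_congr rfl (fun χ _ => hval χ), Finset.sum_const,
            Finset.card_univ, Fintype.card_unique]
          simp
        rw [hbs] at hFP0
        rw [hFP0, innerCount_empty]
        simp
      · rw [ha.1 π hNC h, innerCount_card_one h, pow_zero]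
    · -- card ≥ 2
      have hne : π.Nonempty := Finset.card_pos.mp (by omega)
      obtain ⟨V₀, hV₀⟩ := hne
      have hFP := ha.2 π hNC
      rw [cumulantRHS_eq_blockSum] at hFP
      set K := (Finset.univ.filter (fun χ : ({U : Finset ℕ // U ∈ π} → Fin N) =>
        WeaklyCompatible T π (extendColor π χ) ∧
          components π (extendColor π χ) = {π})).card with hK
      have hpoint : ∀ χ : ({U : Finset ℕ // U ∈ π} → Fin N),
          (if WeaklyCompatible T π (extendColor π χ) then
            ∏ τ ∈ components π (extendColor π χ), a τ
          else 0)
          = (if WeaklyCompatible T π (extendColor π χ) then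
              ∏ τ ∈ components π (extendColor π χ), x ^ innerCount τ
            else 0)
          + (if WeaklyCompatible T π (extendColor π χ) ∧
              components π (extendColor π χ) = {π} then a π - x ^ innerCount π else 0) := by
        intro χ
        by_cases hc : WeaklyCompatible T π (extendColor π χ)
        · rw [if_pos hc, if_pos hc]
          by_cases hcomp : components π (extendColor π χ) = {π}
          · rw [if_pos ⟨hc, hcomp⟩, hcomp, Finset.prod_singleton, Finset.prod_singleton]
            ring
          · rw [if_neg (fun hh => hcomp hh.2), add_zero]
            apply Finset.prod_congr rfl
            intro τ hτ
            have hsub : τ ⊆ π := components_subset hτ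
            have hne2 : τ ≠ π := by
              rintro rfl
              exact hcomp (components_eq_singleton_of_mem hτ)
            exact ih τ (lt_of_le_of_ne hsub hne2) (isNC_subset hNC hsub)
        · rw [if_neg hc, if_neg hc, if_neg (fun hh => hc hh.1), add_zero]
      have hsum : blockSum T a π =
          blockSum T (fun τ => x ^ innerCount τ) π + (K : ℝ) * (a π - x ^ innerCount π) := by
        rw [blockSum, Finset.sum_congr rfl (fun χ _ => hpoint χ), Finset.sum_add_distrib]
        congr 1
        rw [Finset.sum_ite, Finset.sum_const, Finset.sum_const_zero, add_zero,
          nsmul_eq_mul, ← hK]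
      have hKn : K ≤ n := by
        rw [hK, ← hroot, ncard_eq_filter_card]
        apply Finset.card_le_card_of_injOn (fun χ => χ ⟨V₀, hV₀⟩)
        · intro χ hχ
          simp only [Finset.mem_coe, Finset.mem_filter, Finset.mem_univ, true_and] at hχ ⊢
          obtain ⟨hcompat, hcomps⟩ := hχ
          have hconst : ∀ U ∈ π, extendColor π χ U = extendColor π χ V₀ := by
            intro U hU
            have hcompV₀ : component π (extendColor π χ) V₀ = π := by
              have : component π (extendColor π χ) V₀ ∈ components π (extendColor π χ) :=
                Finset.mem_image_of_mem _ hV₀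
              rw [hcomps, Finset.mem_singleton] at this
              exact this
            have hUc : U ∈ component π (extendColor π χ) V₀ := by rw [hcompV₀]; exact hU
            exact (sameComp_color (mem_component.mp hUc).2).symm
          have hchain := (weaklyCompatible_iff_chains T hNC _).mp hcompat V₀ hV₀
          have hmapconst : (chainL π V₀).map (extendColor π χ) =
              (chainL π V₀).map (fun _ => extendColor π χ V₀) :=
            List.map_congr_left (fun X hX => hconst X (chainL_mem_pi hNC hV₀ X hX))
          rw [hmapconst, red_map_const _ _ (chainL_ne_nil hNC hV₀)] at hchain
          rwa [← extendColor_mem χ hV₀]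
        · intro χ₁ h₁ χ₂ h₂ heq
          simp only [Finset.coe_filter, Set.mem_setOf_eq, Finset.mem_univ, true_and] at h₁ h₂
          have hconst : ∀ (χ : {U : Finset ℕ // U ∈ π} → Fin N),
              WeaklyCompatible T π (extendColor π χ) →
              components π (extendColor π χ) = {π} →
              ∀ u : {U : Finset ℕ // U ∈ π}, χ u = χ ⟨V₀, hV₀⟩ := by
            intro χ hcompat hcomps u
            have hcompV₀ : component π (extendColor π χ) V₀ = π := by
              have : component π (extendColor π χ) V₀ ∈ components π (extendColor π χ) :=
                Finset.mem_image_of_mem _ hV₀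
              rw [hcomps, Finset.mem_singleton] at this
              exact this
            have hUc : u.1 ∈ component π (extendColor π χ) V₀ := by rw [hcompV₀]; exact u.2
            have := (sameComp_color (mem_component.mp hUc).2).symm
            rw [extendColor_mem χ u.2, extendColor_mem χ hV₀] at this
            rw [show (⟨u.1, u.2⟩ : {U : Finset ℕ // U ∈ π}) = u from rfl] at this
            exact this
          have heq' : χ₁ ⟨V₀, hV₀⟩ = χ₂ ⟨V₀, hV₀⟩ := heq
          funext u
          rw [hconst χ₁ h₁.1 h₁.2 u, hconst χ₂ h₂.1 h₂.2 u, heq']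
      have hKlt : (K : ℝ) < (n : ℝ) ^ π.card := by
        have h1 : K < n ^ π.card := by
          calc K ≤ n := hKn
            _ = n ^ 1 := (pow_one n).symm
            _ < n ^ π.card := Nat.pow_lt_pow_right (by omega) (by omega)
        exact_mod_cast h1
      rw [hsum, key_identity n d hn2 T hT hroot hreg π hNC, ← hx] at hFP
      have hpow : (0 : ℝ) < (n : ℝ) ^ π.card := pow_pos hn0 _
      have hM : ((n : ℝ) ^ π.card) ≠ 0 := ne_of_gt hpow
      rw [eq_div_iff hM] at hFP
      have hcancel : (a π - x ^ innerCount π) * ((n : ℝ) ^ π.card - (K : ℝ)) = 0 := by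
        linear_combination hFP
      rcases mul_eq_zero.mp hcancel with h | h
      · linarith
      · linarith

end Final
/-- For an `(n,d)`-regular rooted tree `T` with `n ≥ 2` (the root has exactly
`n` children, every other vertex exactly `d` children), the cumulant
coefficients are `α_{T,π} = (d/(n−1))^{I(π)}`. -/
theorem stmt13 {N : ℕ} [NeZero N] (n d : ℕ) (hn2 : 2 ≤ n)
    (T : Set (List (Fin N))) (hT : IsRootedSubtree T)
    (hroot : {j : Fin N | [j] ∈ T}.ncard = n)
    (hreg : ∀ s ∈ T, s ≠ [] → {j : Fin N | j :: s ∈ T}.ncard = d)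
    (a : Blocks → ℝ) (ha : SatisfiesFP n T a) :
    ∀ π : Blocks, IsNC π →
      a π = ((d : ℝ) / ((n : ℝ) - 1)) ^ innerCount π := by
  exact stmt13_aux n d hn2 T hT hroot hreg a ha
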